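/- Let R = ℂ[x_{i,j} : 1 ≤ i ≤ j ≤ n] and S = ℂ[b_{i,j} : 1 ≤ i ≤ j ≤ n], and define the ring homomorphism φ : R → S by φ(x_{i,j}) = Σ_{k ≤ min(i,j)} b_{k,i} b_{k,j} (with x_{i,j} = x_{j,i}). Let 𝔪 ⊂ R be the maximal ideal generated by x_{i,i} − 1 (1 ≤ i ≤ n) and x_{i,j} (i < j). Then φ is injective, and for every i < n, the element b_{i,i}² − 1 lies in the ideal of S generated by φ(𝔪), and b_{i,j} b_{i,k} lies in that ideal whenever (i,j) ≠ (i,i) or (i,k) ≠ (i,i) with j ≠ i or k ≠ i. -/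

import Mathlib

/-- Index set for variables `x_{i,j}` (resp. `b_{i,j}`), `1 ≤ i ≤ j ≤ n`. -/
abbrev UIdx (n : ℕ) := {p : Fin n × Fin n // p.1 ≤ p.2}

/-- The homomorphism `φ : ℂ[x_{i,j}] → ℂ[b_{i,j}]`, `φ(x_{i,j}) = ∑_{k ≤ min(i,j)} b_{k,i} b_{k,j}`
(entries of `bᵀ b` for an upper-triangular `b`). -/
noncomputable def phiMap (n : ℕ) :
    MvPolynomial (UIdx n) ℂ →ₐ[ℂ] MvPolynomial (UIdx n) ℂ :=
  MvPolynomial.aeval (fun v =>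
    ∑ k : Fin n, if hk : k ≤ v.1.1 then
      MvPolynomial.X (⟨(k, v.1.1), hk⟩ : UIdx n) *
      MvPolynomial.X (⟨(k, v.1.2), hk.trans v.2⟩ : UIdx n)
    else 0)

/-- The maximal ideal `𝔪 = (x_{i,i} - 1, x_{i,j} (i < j))`. -/
noncomputable def mIdeal (n : ℕ) : Ideal (MvPolynomial (UIdx n) ℂ) :=
  Ideal.span
    ({q | ∃ i : Fin n, q = MvPolynomial.X (⟨(i, i), le_refl i⟩ : UIdx n) - 1} ∪
     {q | ∃ v : UIdx n, v.1.1 ≠ v.1.2 ∧ q = MvPolynomial.X v})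

namespace Stmt7Aux

open MvPolynomial

set_option maxHeartbeats 1000000 in
set_option synthInstance.maxHeartbeats 200000 in
lemma finStrongInd {n : ℕ} {C : Fin n → Prop}
    (H : ∀ i, (∀ j, j < i → C j) → C i) : ∀ i, C i := by
  have key : ∀ m : ℕ, ∀ i : Fin n, i.1 < m → C i := by
    intro m
    induction m with
    | zero => exact fun i h => absurd h (Nat.not_lt_zero _)
    | succ m IH =>
      intro i h
      refine H i fun j hj => IH j ?_
      have hj' : j.1 < i.1 := hj
      omega
  exact fun i => key (i.1 + 1) i (Nat.lt_succ_self _)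

variable {n : ℕ}

/-- Symmetrized variable. -/
noncomputable def XX (a b : Fin n) : MvPolynomial (UIdx n) ℂ :=
  if h : a ≤ b then X (⟨(a, b), h⟩ : UIdx n) else X (⟨(b, a), le_of_not_ge h⟩ : UIdx n)

lemma XX_eq (a b : Fin n) (h : a ≤ b) : XX a b = X (⟨(a, b), h⟩ : UIdx n) := dif_pos h

lemma phiX (i j : Fin n) (h : i ≤ j) :
    phiMap n (X (⟨(i, j), h⟩ : UIdx n)) =
      ∑ k : Fin n, if k ≤ i then XX k i * XX k j else 0 := by
  rw [phiMap, aeval_X]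
  refine Finset.sum_congr rfl fun k _ => ?_
  by_cases hk : k ≤ i
  · rw [dif_pos hk, if_pos hk, XX_eq k i hk, XX_eq k j (hk.trans h)]
  · rw [dif_neg hk, if_neg hk]

lemma sum_ite_le {A : Type*} [AddCommMonoid A] (i : Fin n) (f : Fin n → A) :
    ∑ k : Fin n, (if k ≤ i then f k else 0) =
      f i + ∑ k : Fin n, (if k < i then f k else 0) := by
  have h1 : ∀ k : Fin n, (if k ≤ i then f k else 0) =
      (if k = i then f k else 0) + (if k < i then f k else 0) := by
    intro k
    by_cases h : k = i
    · subst h; simp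
    · by_cases h2 : k < i
      · rw [if_pos h2.le, if_neg h, if_pos h2, zero_add]
      · rw [if_neg fun hle => h2 (lt_of_le_of_ne hle h), if_neg h, if_neg h2, add_zero]
  rw [Finset.sum_congr rfl fun k _ => h1 k, Finset.sum_add_distrib]
  congr 1
  simp

/-- Evaluation at the identity matrix point. -/
noncomputable def ev0 (n : ℕ) : MvPolynomial (UIdx n) ℂ →+* ℂ :=
  (MvPolynomial.aeval (R := ℂ)
    (fun v : UIdx n => if v.1.1 = v.1.2 then (1 : ℂ) else 0)).toRingHom

lemma ev0_XX (a b : Fin n) : ev0 n (XX a b) = if a = b then 1 else 0 := by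
  unfold XX
  by_cases h : a ≤ b
  · rw [dif_pos h]
    simp [ev0]
  · rw [dif_neg h]
    have hne : ¬ a = b := fun he => h (le_of_eq he)
    have hne' : ¬ b = a := fun he => hne he.symm
    simp [ev0, hne, hne']

noncomputable def Pk (n : ℕ) : Ideal (MvPolynomial (UIdx n) ℂ) := RingHom.ker (ev0 n)

instance : (Pk n).IsPrime := RingHom.ker_isPrime _

/-- Localization at the point. -/
abbrev Ok (n : ℕ) := Localization (Pk n).primeCompl

noncomputable def rho (n : ℕ) : Ok n →+* ℂ :=
  IsLocalization.lift (M := (Pk n).primeCompl) (g := ev0 n) (by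
    rintro ⟨y, hy⟩
    exact isUnit_iff_ne_zero.2 (by simpa [Pk, RingHom.mem_ker] using hy))

lemma rho_alg (r : MvPolynomial (UIdx n) ℂ) :
    rho n (algebraMap _ (Ok n) r) = ev0 n r := IsLocalization.lift_eq _ _

lemma unit_of_rho {a : Ok n} (h : rho n a ≠ 0) : IsUnit a := by
  obtain ⟨⟨r, s⟩, rfl⟩ := IsLocalization.mk'_surjective (Pk n).primeCompl a
  have hs : ev0 n (s : MvPolynomial (UIdx n) ℂ) ≠ 0 :=
    fun h0 => s.2 (RingHom.mem_ker.mpr h0)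
  have hspec := IsLocalization.mk'_spec (Ok n) r s
  have hr : ev0 n r ≠ 0 := by
    intro h0
    apply h
    have := congrArg (rho n) hspec
    rw [map_mul, rho_alg, rho_alg, h0] at this
    rcases mul_eq_zero.1 this with h' | h'
    · exact h'
    · exact absurd h' hs
  have hrmem : r ∈ (Pk n).primeCompl := fun hmem => hr (RingHom.mem_ker.mp hmem)
  have hunit : IsUnit (algebraMap _ (Ok n) r) :=
    IsLocalization.map_units (Ok n) (⟨r, hrmem⟩ : (Pk n).primeCompl)
  rw [← hspec] at hunit
  exact isUnit_of_mul_isUnit_left hunit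

/-- Cholesky (LDL) data: pivots and unipotent entries, by strong recursion. -/
noncomputable def cho (n : ℕ) : Fin n → (Ok n × (Fin n → Ok n))
  | i =>
    let ℓ : Ok n := algebraMap _ _ (XX i i) -
      ∑ k : Fin n, if h : k < i then (cho n k).1 * (cho n k).2 i * (cho n k).2 i else 0
    (ℓ, fun j => Ring.inverse ℓ * (algebraMap _ _ (XX i j) -
      ∑ k : Fin n, if h : k < i then (cho n k).1 * (cho n k).2 i * (cho n k).2 j else 0))
  termination_by i => i.1
  decreasing_by all_goals exact h

noncomputable def lam (n : ℕ) (i : Fin n) : Ok n := (cho n i).1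
noncomputable def gam (n : ℕ) (i j : Fin n) : Ok n := (cho n i).2 j

lemma lam_def (i : Fin n) : lam n i = algebraMap _ _ (XX i i) -
    ∑ k : Fin n, if k < i then lam n k * gam n k i * gam n k i else 0 := by
  conv_lhs => rw [lam, cho]
  simp only [lam, gam, dite_eq_ite]

lemma gam_def (i j : Fin n) : gam n i j = Ring.inverse (lam n i) * (algebraMap _ _ (XX i j) -
    ∑ k : Fin n, if k < i then lam n k * gam n k i * gam n k j else 0) := by
  conv_lhs => rw [gam, cho]
  rw [lam_def]
  simp only [lam, gam, dite_eq_ite]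

lemma res (i : Fin n) :
    rho n (lam n i) = 1 ∧ ∀ j, j ≠ i → rho n (gam n i j) = 0 := by
  induction i using finStrongInd with
  | _ i IH =>
    have hsum : ∀ j : Fin n,
        rho n (∑ k : Fin n, if k < i then lam n k * gam n k i * gam n k j else 0) = 0 := by
      intro j
      rw [map_sum]
      refine Finset.sum_eq_zero fun k _ => ?_
      rw [apply_ite (rho n), map_zero]
      by_cases hk : k < i
      · rw [if_pos hk, map_mul, map_mul, (IH k hk).2 i (ne_of_gt hk), mul_zero, zero_mul]
      · rw [if_neg hk]
    have hlam : rho n (lam n i) = 1 := by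
      rw [lam_def, map_sub, rho_alg, ev0_XX, if_pos rfl, hsum, sub_zero]
    have hunit : IsUnit (lam n i) := unit_of_rho (by rw [hlam]; exact one_ne_zero)
    have hinv : rho n (Ring.inverse (lam n i)) = 1 := by
      have := congrArg (rho n) (Ring.mul_inverse_cancel _ hunit)
      rw [map_mul, hlam, one_mul, map_one] at this
      exact this
    refine ⟨hlam, fun j hj => ?_⟩
    rw [gam_def, map_mul, hinv, one_mul, map_sub, rho_alg, ev0_XX,
      if_neg (fun he => hj he.symm), hsum, sub_zero]

lemma lam_unit (i : Fin n) : IsUnit (lam n i) :=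
  unit_of_rho (by rw [(res i).1]; exact one_ne_zero)

lemma gam_diag (i : Fin n) : gam n i i = 1 := by
  rw [gam_def, ← lam_def, Ring.inverse_mul_cancel _ (lam_unit i)]

lemma chol (i j : Fin n) :
    ∑ k : Fin n, (if k ≤ i then lam n k * gam n k i * gam n k j else 0) =
      algebraMap _ (Ok n) (XX i j) := by
  rw [sum_ite_le i (fun k => lam n k * gam n k i * gam n k j), gam_diag, mul_one,
    gam_def, ← mul_assoc, Ring.mul_inverse_cancel _ (lam_unit i), one_mul, sub_add_cancel]

abbrev Fr (n : ℕ) := FractionRing (MvPolynomial (UIdx n) ℂ)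
abbrev Kk (n : ℕ) := AlgebraicClosure (Fr n)

noncomputable def gmap (n : ℕ) : MvPolynomial (UIdx n) ℂ →+* Kk n :=
  (algebraMap (Fr n) (Kk n)).comp (algebraMap _ (Fr n))

lemma gmap_inj : Function.Injective (gmap n) :=
  (algebraMap (Fr n) (Kk n)).injective.comp (IsFractionRing.injective _ _)

noncomputable def psi (n : ℕ) : Ok n →+* Kk n :=
  IsLocalization.lift (M := (Pk n).primeCompl) (g := gmap n) (by
    rintro ⟨y, hy⟩
    have hy0 : y ≠ 0 := by
      rintro rfl
      exact hy (Pk n).zero_mem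
    exact isUnit_iff_ne_zero.2 fun h0 => hy0 (gmap_inj (by rw [h0, map_zero])))

lemma psi_alg (r : MvPolynomial (UIdx n) ℂ) :
    psi n (algebraMap _ (Ok n) r) = gmap n r := IsLocalization.lift_eq _ _

noncomputable def sq (n : ℕ) (k : Fin n) : Kk n :=
  (IsAlgClosed.exists_pow_nat_eq (psi n (lam n k)) (n := 2) (by norm_num)).choose

lemma sq_spec (k : Fin n) : sq n k ^ 2 = psi n (lam n k) :=
  (IsAlgClosed.exists_pow_nat_eq (psi n (lam n k)) (n := 2) (by norm_num)).choose_spec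

noncomputable def tau (n : ℕ) : MvPolynomial (UIdx n) ℂ →+* Kk n :=
  MvPolynomial.eval₂Hom ((gmap n).comp MvPolynomial.C)
    (fun v : UIdx n => sq n v.1.1 * psi n (gam n v.1.1 v.1.2))

lemma tau_XX (a b : Fin n) (h : a ≤ b) :
    tau n (XX a b) = sq n a * psi n (gam n a b) := by
  rw [XX_eq a b h, tau, MvPolynomial.eval₂Hom_X']

set_option maxHeartbeats 1000000 in
set_option synthInstance.maxHeartbeats 400000 in
lemma tau_phi (p : MvPolynomial (UIdx n) ℂ) : tau n (phiMap n p) = gmap n p := by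
  have key : (tau n).comp (phiMap n).toRingHom = gmap n := by
    apply MvPolynomial.ringHom_ext
    · intro r
      simp only [RingHom.comp_apply, AlgHom.toRingHom_eq_coe, RingHom.coe_coe]
      rw [show (phiMap n) (MvPolynomial.C r) = MvPolynomial.C r from by
        simp [phiMap]]
      rw [tau, MvPolynomial.eval₂Hom_C, RingHom.comp_apply]
    · rintro ⟨⟨i, j⟩, hij⟩
      simp only [RingHom.comp_apply, AlgHom.toRingHom_eq_coe, RingHom.coe_coe]
      rw [phiX i j hij, map_sum]
      have : ∀ k : Fin n, tau n (if k ≤ i then XX k i * XX k j else 0) =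
          (if k ≤ i then psi n (lam n k * gam n k i * gam n k j) else 0) := by
        intro k
        rw [apply_ite (tau n), map_zero]
        by_cases hk : k ≤ i
        · rw [if_pos hk, if_pos hk, map_mul, tau_XX k i hk, tau_XX k j (hk.trans hij)]
          rw [map_mul, map_mul]
          ring_nf
          rw [sq_spec]
          ring
        · rw [if_neg hk, if_neg hk]
      rw [Finset.sum_congr rfl fun k _ => this k]
      have := congrArg (psi n) (chol (n := n) i j)
      rw [map_sum] at this
      have heq : ∀ k : Fin n,
          psi n (if k ≤ i then lam n k * gam n k i * gam n k j else 0) =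
          (if k ≤ i then psi n (lam n k * gam n k i * gam n k j) else 0) := fun k => by
        rw [apply_ite (psi n), map_zero]
      rw [Finset.sum_congr rfl fun k _ => heq k] at this
      rw [this, psi_alg, XX_eq i j hij]
  exact RingHom.congr_fun key p

lemma phi_inj : Function.Injective (phiMap n) := by
  intro p q h
  apply gmap_inj
  rw [← tau_phi, ← tau_phi, h]

/-! ### Ideal membership -/

lemma hgen_offdiag (v : UIdx n) (hne : v.1.1 ≠ v.1.2) :
    phiMap n (MvPolynomial.X v) ∈ (mIdeal n).map (phiMap n) :=
  Ideal.mem_map_of_mem _ (Ideal.subset_span (Or.inr ⟨v, hne, rfl⟩))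

lemma hgen_diag (i : Fin n) :
    phiMap n (MvPolynomial.X (⟨(i, i), le_refl i⟩ : UIdx n)) - 1 ∈
      (mIdeal n).map (phiMap n) := by
  have h := Ideal.mem_map_of_mem (phiMap n)
    (Ideal.subset_span (Or.inl ⟨i, rfl⟩) :
      MvPolynomial.X (⟨(i, i), le_refl i⟩ : UIdx n) - 1 ∈ mIdeal n)
  rwa [map_sub, map_one] at h

lemma main (i : Fin n) :
    (XX i i * XX i i - 1 ∈ (mIdeal n).map (phiMap n)) ∧
    (∀ j k : Fin n, i ≤ j → i ≤ k → (j ≠ i ∨ k ≠ i) →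
      XX i j * XX i k ∈ (mIdeal n).map (phiMap n)) := by
  induction i using finStrongInd with
  | _ i IH =>
    set J := (mIdeal n).map (phiMap n) with hJ
    have hsumlt : ∀ j : Fin n, i ≤ j →
        (∑ m : Fin n, if m < i then XX m i * XX m j else 0) ∈ J := by
      intro j hj
      refine Ideal.sum_mem _ fun m _ => ?_
      by_cases hm : m < i
      · rw [if_pos hm]
        exact (IH m hm).2 i j hm.le (hm.le.trans hj) (Or.inl (ne_of_gt hm))
      · rw [if_neg hm]; exact J.zero_mem
    have stepA : ∀ k : Fin n, i < k → XX i i * XX i k ∈ J := by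
      intro k hk
      have hphi := hgen_offdiag (⟨(i, k), hk.le⟩ : UIdx n) (ne_of_lt hk)
      rw [phiX i k hk.le] at hphi
      rw [sum_ite_le i (fun m => XX m i * XX m k)] at hphi
      have := J.sub_mem hphi (hsumlt k hk.le)
      simpa using this
    have stepB : XX i i * XX i i - 1 ∈ J := by
      have hphi := hgen_diag i
      rw [phiX i i (le_refl i)] at hphi
      rw [sum_ite_le i (fun m => XX m i * XX m i)] at hphi
      have := J.sub_mem hphi (hsumlt i (le_refl i))
      have heq : XX i i * XX i i + (∑ m : Fin n, if m < i then XX m i * XX m i else 0) - 1 -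
          (∑ m : Fin n, if m < i then XX m i * XX m i else 0) = XX i i * XX i i - 1 := by ring
      rwa [heq] at this
    refine ⟨stepB, fun j k hij hik hne => ?_⟩
    by_cases hji : j = i
    · subst hji
      rcases hne with h | h
      · exact absurd rfl h
      · exact stepA k (lt_of_le_of_ne hik (fun he => h he.symm))
    · by_cases hki : k = i
      · subst hki
        rw [mul_comm]
        exact stepA j (lt_of_le_of_ne hij (fun he => hji he.symm))
      · have h1 : XX i i * XX i j ∈ J :=
          stepA j (lt_of_le_of_ne hij (fun he => hji he.symm))
        have heq : XX i j * XX i k =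
            (XX i i * XX i j) * (XX i i * XX i k) -
            (XX i i * XX i i - 1) * (XX i j * XX i k) := by ring
        rw [heq]
        exact J.sub_mem (Ideal.mul_mem_right _ _ h1) (Ideal.mul_mem_right _ _ stepB)

end Stmt7Aux

/-- `φ` is injective; `b_{i,i}² - 1` lies in the ideal generated by `φ(𝔪)`;
and `b_{i,j} b_{i,k}` lies in that ideal whenever `j ≠ i` or `k ≠ i`. -/
theorem stmt7 (n : ℕ) :
    Function.Injective (phiMap n) ∧
    (∀ i : Fin n,
      MvPolynomial.X (⟨(i, i), le_refl i⟩ : UIdx n) ^ 2 - 1 ∈ (mIdeal n).map (phiMap n)) ∧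
    (∀ (i j k : Fin n) (hij : i ≤ j) (hik : i ≤ k), j ≠ i ∨ k ≠ i →
      MvPolynomial.X (⟨(i, j), hij⟩ : UIdx n) * MvPolynomial.X (⟨(i, k), hik⟩ : UIdx n) ∈
        (mIdeal n).map (phiMap n)) := by
  refine ⟨Stmt7Aux.phi_inj, fun i => ?_, fun i j k hij hik hne => ?_⟩
  · have := (Stmt7Aux.main i).1
    rwa [Stmt7Aux.XX_eq i i (le_refl i), ← pow_two] at this
  · have := (Stmt7Aux.main i).2 j k hij hik hne
    rwa [Stmt7Aux.XX_eq i j hij, Stmt7Aux.XX_eq i k hik] at this
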